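/- Let f : ℂ → ℂ be a transcendental entire function and let D ⊆ ℂ be an unbounded domain. Suppose there is a sequence (Σ_n) of pairwise distinct nonempty bounded open subsets of D such that min{|z| : z ∈ closure(Σ_n)} → ∞ as n → ∞, and f(closure(Σ_n)) ⊇ closure(Σ_{n+1}) for every n. Suppose further there exist strictly increasing sequences (n_j) and (m_j) of natural numbers with 0 ≤ m_j ≤ n_j for all j, m_j → ∞ as j → ∞, and f(closure(Σ_{n_j})) ⊇ closure(Σ_{m_j}) for every j. Then, for every sequence (a_n) of positive reals with a_n → ∞, there exist ζ ∈ ℂ and N ∈ ℕ such that: ζ lies in the closure of D; f^n(ζ) lies in the closure of D for all n ≥ 1; ζ ∈ I(f); ζ does not lie in the interior of I(f) (i.e. ζ ∈ J(f)); and |f^n(ζ)| ≤ a_n for all n ≥ N. -/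

import Mathlib

open Complex Filter Set Metric Real

noncomputable section

/-- An entire function is transcendental if it is holomorphic on `ℂ` and not a polynomial. -/
def TranscendentalEntire (f : ℂ → ℂ) : Prop :=
  Differentiable ℂ f ∧ ¬∃ p : Polynomial ℂ, ∀ z, f z = p.eval z

/-- The escaping set `I(f)`. -/
def escapingSet (f : ℂ → ℂ) : Set ℂ :=
  {z : ℂ | Tendsto (fun n => ‖f^[n] z‖) atTop atTop}

/-- A (normalized) direct tract of `f`: an unbounded connected component of
`{z : |f z| > 1}` with unbounded complement. -/
def IsDirectTract (f : ℂ → ℂ) (D : Set ℂ) : Prop :=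
  (∃ z₀ ∈ D, D = connectedComponentIn {z : ℂ | 1 < ‖f z‖} z₀) ∧
  ¬Bornology.IsBounded D ∧ ¬Bornology.IsBounded Dᶜ

/-- A (normalized) logarithmic tract of `f`: a direct tract which is simply connected
and on which `f` restricts to a covering map onto `{w : |w| > 1}`. -/
def IsLogTract (f : ℂ → ℂ) (D : Set ℂ) : Prop :=
  IsDirectTract f D ∧ SimplyConnectedSpace D ∧
  ∃ hD : ∀ z ∈ D, 1 < ‖f z‖,
    IsCoveringMap (fun z : D => (⟨f (z : ℂ), hD z z.2⟩ : {w : ℂ // 1 < ‖w‖}))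

/-- The maximum modulus of `f` over points of the tract `D` of modulus `ρ`. -/
def MD (f : ℂ → ℂ) (D : Set ℂ) (ρ : ℝ) : ℝ :=
  sSup ((fun z => ‖f z‖) '' {z ∈ D | ‖z‖ = ρ})

/-- The open annulus `{z : r < |z| < R}`. -/
def ann (r R : ℝ) : Set ℂ :=
  {z : ℂ | r < ‖z‖ ∧ ‖z‖ < R}

open Classical in
/-- One step of the "stalling" dynamics on indices: jump down from `nseq j` to `mseq j`,
otherwise increase by one. -/
noncomputable def stallStep (nseq mseq : ℕ → ℕ) (i : ℕ) : ℕ :=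
  if h : ∃ j, nseq j = i then mseq h.choose else i + 1

open Classical in
/-- The main itinerary: go up by one whenever the time allows it, otherwise jump down
from `nseq j` to `mseq j`. -/
noncomputable def itin (nseq mseq Gn : ℕ → ℕ) : ℕ → ℕ
  | 0 => 0
  | n + 1 =>
    if h : ∃ j, nseq j = itin nseq mseq Gn n ∧ n + 1 < Gn (j + 1) then mseq h.choose
    else itin nseq mseq Gn n + 1

/-- Realization of orbits along an itinerary through compact sets, by compactness. -/
theorem orbit_exists {f : ℂ → ℂ} (hf : Continuous f) (C : ℕ → Set ℂ)
    (hc : ∀ n, IsCompact (C n)) (hne : ∀ n, (C n).Nonempty)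
    (E : Set ℂ) (hE : IsClosed E)
    (σ : ℕ → ℕ) (hσ : ∀ n, C (σ (n + 1)) ⊆ f '' C (σ n))
    (hEne : ∀ n, (({z | ∀ i ≤ n, f^[i] z ∈ C (σ i)}) ∩ E).Nonempty) :
    ∃ z, (∀ n, f^[n] z ∈ C (σ n)) ∧ z ∈ E := by
  set K : ℕ → Set ℂ := fun n => ({z | ∀ i ≤ n, f^[i] z ∈ C (σ i)}) ∩ E with hK
  have hKcl : ∀ n, IsClosed (K n) := by
    intro n
    apply IsClosed.inter _ hE
    have : {z | ∀ i ≤ n, f^[i] z ∈ C (σ i)} = ⋂ i ∈ Set.Iic n, f^[i] ⁻¹' C (σ i) := by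
      ext z; simp [Set.mem_iInter]
    rw [this]
    exact isClosed_biInter fun i _ => ((hc (σ i)).isClosed).preimage (hf.iterate i)
  have hKsub : ∀ n, K n ⊆ C (σ 0) := by
    intro n z hz
    have := hz.1 0 (Nat.zero_le n)
    simpa using this
  have hKmono : ∀ n, K (n + 1) ⊆ K n :=
    fun n z hz => ⟨fun i hi => hz.1 i (hi.trans (Nat.le_succ n)), hz.2⟩
  have h0 : IsCompact (K 0) := (hc (σ 0)).of_isClosed_subset (hKcl 0) (hKsub 0)
  obtain ⟨z, hz⟩ :=
    IsCompact.nonempty_iInter_of_sequence_nonempty_isCompact_isClosed K hKmono hEne h0 hKcl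
  have hz' := Set.mem_iInter.mp hz
  exact ⟨z, fun n => (hz' n).1 n le_rfl, (hz' 0).2⟩

/-- Realization of orbits, version without the closed-set constraint. -/
theorem orbit_exists' {f : ℂ → ℂ} (hf : Continuous f) (C : ℕ → Set ℂ)
    (hc : ∀ n, IsCompact (C n)) (hne : ∀ n, (C n).Nonempty)
    (σ : ℕ → ℕ) (hσ : ∀ n, C (σ (n + 1)) ⊆ f '' C (σ n)) :
    ∃ z, ∀ n, f^[n] z ∈ C (σ n) := by
  have key : ∀ n, ∀ w ∈ C (σ n), ∃ z, f^[n] z = w ∧ ∀ i ≤ n, f^[i] z ∈ C (σ i) := by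
    intro n
    induction n with
    | zero =>
      intro w hw
      exact ⟨w, rfl, fun i hi => by interval_cases i; simpa using hw⟩
    | succ n ih =>
      intro w hw
      obtain ⟨v, hv, hvw⟩ := hσ n hw
      obtain ⟨z, hz1, hz2⟩ := ih v hv
      refine ⟨z, ?_, ?_⟩
      · rw [Function.iterate_succ_apply', hz1, hvw]
      · intro i hi
        by_cases hi' : i ≤ n
        · exact hz2 i hi'
        · have hieq : i = n + 1 := by omega
          subst hieq
          rw [Function.iterate_succ_apply', hz1, hvw]
          exact hw
  obtain ⟨z, hz, -⟩ := orbit_exists hf C hc hne Set.univ isClosed_univ σ hσ (by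
    intro n
    obtain ⟨w, hw⟩ := hne (σ n)
    obtain ⟨z, _, hz2⟩ := key n w hw
    exact ⟨z, hz2, Set.mem_univ z⟩)
  exact ⟨z, hz⟩

/-- **Theorem 2.3.** A general recipe for constructing slow escaping points. -/
theorem slow_escape_recipe
    (f : ℂ → ℂ) (hf : TranscendentalEntire f)
    (D : Set ℂ) (hDopen : IsOpen D) (hDconn : IsConnected D)
    (hDunb : ¬Bornology.IsBounded D)
    (S : ℕ → Set ℂ) (hSinj : Function.Injective S)
    (hSne : ∀ n, (S n).Nonempty) (hSbdd : ∀ n, Bornology.IsBounded (S n))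
    (hSopen : ∀ n, IsOpen (S n)) (hSsub : ∀ n, S n ⊆ D)
    (hmin : Tendsto (fun n => sInf ((fun z : ℂ => ‖z‖) '' closure (S n))) atTop atTop)
    (hcov : ∀ n : ℕ, closure (S (n + 1)) ⊆ f '' closure (S n))
    (nseq mseq : ℕ → ℕ) (hn : StrictMono nseq) (hm : StrictMono mseq)
    (hmn : ∀ j, mseq j ≤ nseq j) (hmtop : Tendsto mseq atTop atTop)
    (hcov2 : ∀ j : ℕ, closure (S (mseq j)) ⊆ f '' closure (S (nseq j)))
    (a : ℕ → ℝ) (hapos : ∀ n, 0 < a n) (ha : Tendsto a atTop atTop) :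
    ∃ (ζ : ℂ) (N : ℕ),
      ζ ∈ closure D ∧
      (∀ n : ℕ, 1 ≤ n → f^[n] ζ ∈ closure D) ∧
      ζ ∈ escapingSet f ∧
      ζ ∉ interior (escapingSet f) ∧
      ∀ n : ℕ, N ≤ n → ‖f^[n] ζ‖ ≤ a n := by
  classical
  have hcont : Continuous f := hf.1.continuous
  set C : ℕ → Set ℂ := fun n => closure (S n) with hCdef
  have hCc : ∀ n, IsCompact (C n) := fun n => (hSbdd n).isCompact_closure
  have hCne : ∀ n, (C n).Nonempty := fun n => (hSne n).closure
  -- maximum modulus over the first k+1 sets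
  set Mf : ℕ → ℝ := fun k => sSup ((fun z : ℂ => ‖z‖) '' C k) with hMf
  set M' : ℕ → ℝ := fun k => (Finset.range (k + 1)).sup' Finset.nonempty_range_add_one Mf with hM'
  have hMleM' : ∀ i k, i ≤ k → Mf i ≤ M' k := fun i k h =>
    Finset.le_sup' Mf (Finset.mem_range.mpr (Nat.lt_succ_of_le h))
  -- time thresholds
  have hGex : ∀ k : ℕ, ∃ T : ℕ, ∀ m ≥ T, M' k ≤ a m := fun k =>
    Filter.eventually_atTop.mp (ha.eventually_ge_atTop (M' k))
  choose G hGspec using hGex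
  set G' : ℕ → ℕ := fun k => (Finset.range (k + 1)).sup G with hG'
  have hG'mono : Monotone G' := fun i j h =>
    Finset.sup_mono (Finset.range_subset_range.mpr (by omega))
  have hG'spec : ∀ k m, G' k ≤ m → M' k ≤ a m := by
    intro k m h
    exact hGspec k m (le_trans (Finset.le_sup (Finset.self_mem_range_succ k)) h)
  set Gn : ℕ → ℕ := fun j => G' (nseq j) with hGnDef
  have hGnmono : Monotone Gn := fun i j h => hG'mono (hn.monotone h)
  -- the itinerary
  set s : ℕ → ℕ := itin nseq mseq Gn with hsdef
  have hs0 : s 0 = 0 := rfl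
  have hsucc : ∀ n, s (n + 1) =
      if h : ∃ j, nseq j = s n ∧ n + 1 < Gn (j + 1) then mseq h.choose else s n + 1 :=
    fun n => rfl
  have hcase : ∀ n, (∃ j, nseq j = s n ∧ n + 1 < Gn (j + 1) ∧ s (n + 1) = mseq j) ∨
      (s (n + 1) = s n + 1 ∧ ∀ j, nseq j = s n → Gn (j + 1) ≤ n + 1) := by
    intro n
    by_cases h : ∃ j, nseq j = s n ∧ n + 1 < Gn (j + 1)
    · exact Or.inl ⟨h.choose, h.choose_spec.1, h.choose_spec.2, by rw [hsucc n, dif_pos h]⟩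
    · refine Or.inr ⟨by rw [hsucc n, dif_neg h], ?_⟩
      intro j hj
      by_contra hcon
      exact h ⟨j, hj, Nat.lt_of_not_le hcon⟩
  have hGood : ∀ n, C (s (n + 1)) ⊆ f '' C (s n) := by
    intro n
    rcases hcase n with ⟨j, hj1, _, hj3⟩ | ⟨h1, _⟩
    · rw [hj3, ← hj1]; exact hcov2 j
    · rw [h1]; exact hcov (s n)
  -- the index valuation Jf
  have hJfex : ∀ m : ℕ, ∃ j, m ≤ nseq j := fun m => ⟨m, hn.le_apply⟩
  set Jf : ℕ → ℕ := fun m => Nat.find (hJfex m) with hJfdef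
  have hJf1 : ∀ m, m ≤ nseq (Jf m) := fun m => Nat.find_spec (hJfex m)
  have hJf2 : ∀ m j, m ≤ nseq j → Jf m ≤ j := fun m j h => Nat.find_min' (hJfex m) h
  set N₀ : ℕ := Gn (Jf 0) with hN₀
  -- the time invariant
  have hInv : ∀ n, Gn (Jf (s n)) ≤ max n N₀ := by
    intro n
    induction n with
    | zero => rw [hs0]; exact le_max_right 0 N₀
    | succ n ih =>
      rcases hcase n with ⟨j, hj1, _, hj3⟩ | ⟨h1, h2⟩
      · have e1 : Jf (s n) ≤ j := hJf2 _ _ (le_of_eq hj1.symm)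
        have e2 : nseq (Jf (s n)) = nseq j :=
          le_antisymm (hn.monotone e1) (hj1 ▸ hJf1 (s n))
        have e3 : Jf (s (n + 1)) ≤ j := by
          rw [hj3]; exact hJf2 _ _ (hmn j)
        calc Gn (Jf (s (n + 1))) ≤ Gn j := hGnmono e3
          _ = Gn (Jf (s n)) := by simp only [hGnDef]; rw [e2]
          _ ≤ max n N₀ := ih
          _ ≤ max (n + 1) N₀ := max_le_max (Nat.le_succ n) le_rfl
      · by_cases htrap : ∃ j, nseq j = s n
        · obtain ⟨j0, hj0⟩ := htrap
          have hle : Gn (j0 + 1) ≤ n + 1 := h2 j0 hj0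
          have : s (n + 1) ≤ nseq (j0 + 1) := by
            rw [h1, ← hj0]
            exact hn (Nat.lt_succ_self j0)
          calc Gn (Jf (s (n + 1))) ≤ Gn (j0 + 1) := hGnmono (hJf2 _ _ this)
            _ ≤ n + 1 := hle
            _ ≤ max (n + 1) N₀ := le_max_left _ _
        · have hlt : s n < nseq (Jf (s n)) :=
            lt_of_le_of_ne (hJf1 (s n)) (fun e => htrap ⟨Jf (s n), e.symm⟩)
          have : s (n + 1) ≤ nseq (Jf (s n)) := by rw [h1]; omega
          calc Gn (Jf (s (n + 1))) ≤ Gn (Jf (s n)) := hGnmono (hJf2 _ _ this)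
            _ ≤ max n N₀ := ih
            _ ≤ max (n + 1) N₀ := max_le_max (Nat.le_succ n) le_rfl
  -- the itinerary tends to infinity
  have hsT : Tendsto s atTop atTop := by
    rw [tendsto_atTop_atTop]
    intro K
    set T : ℕ := Gn K with hT
    have hup : ∀ n, T ≤ n → s n < K → s (n + 1) = s n + 1 := by
      intro n hTn hlt
      rcases hcase n with ⟨j, hj1, hj2, _⟩ | ⟨h1, _⟩
      · exfalso
        have hjK : j < K := by
          have : nseq j < nseq K := lt_of_lt_of_le (hj1 ▸ hlt) hn.le_apply
          exact hn.lt_iff_lt.mp this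
        have : Gn (j + 1) ≤ T := hGnmono hjK
        omega
      · exact h1
    have hattain : ∃ n, T ≤ n ∧ K ≤ s n := by
      by_contra hcon
      push_neg at hcon
      have grow : ∀ q, s (T + q) = s T + q := by
        intro q
        induction q with
        | zero => rfl
        | succ q ih =>
          have h1 : s (T + q + 1) = s (T + q) + 1 :=
            hup (T + q) (Nat.le_add_right T q) (hcon (T + q) (Nat.le_add_right T q))
          have : T + (q + 1) = T + q + 1 := by omega
          rw [this, h1, ih]
          omega
      have := hcon (T + K) (Nat.le_add_right T K)
      rw [grow K] at this
      omega
    obtain ⟨n0, hn0T, hn0K⟩ := hattain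
    refine ⟨n0, fun n hnn0 => ?_⟩
    have pers : ∀ m, K ≤ s (n0 + m) := by
      intro m
      induction m with
      | zero => simpa using hn0K
      | succ m ih =>
        have hT' : T ≤ n0 + m := le_trans hn0T (Nat.le_add_right _ _)
        rcases hcase (n0 + m) with ⟨j, hj1, hj2, hj3⟩ | ⟨h1, _⟩
        · have hjK : K ≤ j := by
            by_contra hcon
            have : Gn (j + 1) ≤ T := hGnmono (by omega)
            omega
          have : n0 + (m + 1) = (n0 + m) + 1 := by omega
          rw [this, hj3]
          calc K ≤ mseq K := hm.le_apply
            _ ≤ mseq j := hm.monotone hjK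
        · have : n0 + (m + 1) = (n0 + m) + 1 := by omega
          rw [this, h1]
          omega
    have := pers (n - n0)
    rwa [Nat.add_sub_cancel' hnn0] at this
  -- stall step transitions
  have hψgood : ∀ i, C (stallStep nseq mseq i) ⊆ f '' C i := by
    intro i
    unfold stallStep
    split_ifs with h
    · have h2 := hcov2 h.choose
      rw [h.choose_spec] at h2
      exact h2
    · exact hcov i
  have hψbd : ∀ j0 i, i ≤ nseq j0 → stallStep nseq mseq i ≤ nseq j0 := by
    intro j0 i hi
    unfold stallStep
    split_ifs with h
    · calc mseq h.choose ≤ nseq h.choose := hmn _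
        _ = i := h.choose_spec
        _ ≤ nseq j0 := hi
    · rcases lt_or_eq_of_le hi with h' | h'
      · omega
      · exact absurd ⟨j0, h'.symm⟩ h
  -- stalled points: points following s up to time k with bounded orbit afterwards
  have hstall : ∀ k : ℕ, ∃ z, (∀ i ≤ k, f^[i] z ∈ C (s i)) ∧ z ∉ escapingSet f := by
    intro k
    set ψ : ℕ → ℕ := stallStep nseq mseq with hψ
    set σ : ℕ → ℕ := fun i => if i ≤ k then s i else ψ^[i - k] (s k) with hσdef
    have hσk : ∀ i, i ≤ k → σ i = s i := fun i h => if_pos h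
    have hσ2 : ∀ i, k ≤ i → σ i = ψ^[i - k] (s k) := by
      intro i h
      by_cases h' : i ≤ k
      · have : i = k := le_antisymm h' h
        subst this
        simp [hσdef]
      · simp [hσdef, h']
    have hGoodσ : ∀ i, C (σ (i + 1)) ⊆ f '' C (σ i) := by
      intro i
      rcases lt_or_ge i k with h | h
      · rw [hσk i (le_of_lt h), hσk (i + 1) h]
        exact hGood i
      · rw [hσ2 i h, hσ2 (i + 1) (le_trans h (Nat.le_succ i))]
        have : i + 1 - k = (i - k) + 1 := by omega
        rw [this, Function.iterate_succ_apply']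
        exact hψgood _
    obtain ⟨z, hz⟩ := orbit_exists' hcont C hCc hCne σ hGoodσ
    refine ⟨z, fun i hi => by rw [← hσk i hi]; exact hz i, ?_⟩
    -- the orbit is bounded
    set B : ℕ := max ((Finset.range (k + 1)).sup s) (nseq (s k)) with hB
    have hσB : ∀ i, σ i ≤ B := by
      intro i
      by_cases hik : i ≤ k
      · rw [hσk i hik]
        exact le_trans (Finset.le_sup (Finset.mem_range.mpr (by omega))) (le_max_left _ _)
      · rw [hσ2 i (le_of_not_ge hik)]
        have : ∀ q, ψ^[q] (s k) ≤ nseq (s k) := by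
          intro q
          induction q with
          | zero => exact hn.le_apply
          | succ q ih =>
            rw [Function.iterate_succ_apply']
            exact hψbd _ _ ih
        exact le_trans (this _) (le_max_right _ _)
    have hU : Bornology.IsBounded (⋃ m ∈ Finset.range (B + 1), C m) :=
      (Bornology.isBounded_biUnion_finset _).mpr fun m _ => (hSbdd m).closure
    obtain ⟨R, hR⟩ := isBounded_iff_forall_norm_le.mp hU
    intro hesc
    have hev : ∀ᶠ q in atTop, R < ‖f^[q] z‖ := hesc.eventually_gt_atTop R
    obtain ⟨q, hq⟩ := hev.exists
    have hmem : f^[q] z ∈ ⋃ m ∈ Finset.range (B + 1), C m := by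
      exact Set.mem_biUnion (Finset.mem_range.mpr (Nat.lt_succ_of_le (hσB q))) (hz q)
    have := hR _ hmem
    linarith
  -- existence of ζ
  obtain ⟨ζ, hζorb, hζE⟩ := orbit_exists hcont C hCc hCne
    (closure (escapingSet f)ᶜ) isClosed_closure s hGood (by
      intro n
      obtain ⟨z, hz1, hz2⟩ := hstall n
      exact ⟨z, hz1, subset_closure hz2⟩)
  refine ⟨ζ, N₀, ?_, ?_, ?_, ?_, ?_⟩
  · have := hζorb 0
    simp only [Function.iterate_zero_apply] at this
    exact closure_mono (hSsub (s 0)) this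
  · intro n _
    exact closure_mono (hSsub (s n)) (hζorb n)
  · show Tendsto (fun n => ‖f^[n] ζ‖) atTop atTop
    apply tendsto_atTop_mono (f := fun n => sInf ((fun z : ℂ => ‖z‖) '' C (s n)))
    · intro n
      refine csInf_le ⟨0, ?_⟩ ⟨f^[n] ζ, hζorb n, rfl⟩
      rintro x ⟨w, -, rfl⟩
      exact norm_nonneg w
    · exact hmin.comp hsT
  · have h2 := hζE
    rw [closure_compl] at h2
    exact h2
  · intro n hNn
    have h1 : ‖f^[n] ζ‖ ≤ Mf (s n) := by
      refine le_csSup ((hCc (s n)).image continuous_norm).bddAbove ?_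
      exact ⟨f^[n] ζ, hζorb n, rfl⟩
    have h2 : Mf (s n) ≤ M' (nseq (Jf (s n))) := hMleM' _ _ (hJf1 (s n))
    have h3 : M' (nseq (Jf (s n))) ≤ a n := by
      apply hG'spec
      have := hInv n
      have hmax : max n N₀ = n := max_eq_left hNn
      rw [hmax] at this
      exact this
    linarith
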